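/- Let d ≥ 2. If ρ₁ and ρ₂ are density matrices on ℂ^d ⊗ ℂ^d belonging to 𝔄𝔉_d and λ ∈ [0,1], then λρ₁ + (1−λ)ρ₂ also belongs to 𝔄𝔉_d; that is, the set 𝔄𝔉_d is convex. -/

import Mathlib

open Matrix Kronecker Complex
open scoped ComplexOrder

/-- The canonical maximally entangled vector `|ψ⁺⟩ = (1/√d) ∑ᵢ |ii⟩` on `ℂ^d ⊗ ℂ^d`. -/
noncomputable def psiPlus (d : ℕ) : (Fin d × Fin d) → ℂ :=
  fun p => if p.1 = p.2 then ((Real.sqrt d)⁻¹ : ℝ) else 0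

/-- The fully entangled fraction: the supremum over `d × d` unitaries `V` of
`⟨ψ⁺| (I ⊗ V)† ρ (I ⊗ V) |ψ⁺⟩`. -/
noncomputable def fef (d : ℕ) (ρ : Matrix (Fin d × Fin d) (Fin d × Fin d) ℂ) : ℝ :=
  ⨆ V : Matrix.unitaryGroup (Fin d) ℂ,
    (star (psiPlus d) ⬝ᵥ
      ((((1 : Matrix (Fin d) (Fin d) ℂ) ⊗ₖ (V : Matrix (Fin d) (Fin d) ℂ))ᴴ * ρ *
        ((1 : Matrix (Fin d) (Fin d) ℂ) ⊗ₖ (V : Matrix (Fin d) (Fin d) ℂ))) *ᵥ psiPlus d)).re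

/-- A density matrix: positive semidefinite with unit trace. -/
def IsDensityMatrix {n : Type*} [Fintype n] (ρ : Matrix n n ℂ) : Prop :=
  ρ.PosSemidef ∧ ρ.trace = 1

/-- `ρ` has absolute fully entangled fraction: `F(UρU†) ≤ 1/d` for every unitary `U`. -/
def AbsFEF (d : ℕ) (ρ : Matrix (Fin d × Fin d) (Fin d × Fin d) ℂ) : Prop :=
  ∀ U ∈ Matrix.unitaryGroup (Fin d × Fin d) ℂ, fef d (U * ρ * Uᴴ) ≤ 1 / d

/-- Basis vector `|ij⟩` of `ℂ^d ⊗ ℂ^d`. -/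
def ket (d : ℕ) (i j : Fin d) : (Fin d × Fin d) → ℂ :=
  fun p => if p = (i, j) then 1 else 0

/-- Rank-one projector `|v⟩⟨v|`. -/
def proj {n : Type*} (v : n → ℂ) : Matrix n n ℂ :=
  Matrix.vecMulVec v (star v)


/-- The vector `(1 ⊗ V) |ψ⁺⟩`. -/
noncomputable def yVec (d : ℕ) (V : Matrix (Fin d) (Fin d) ℂ) : (Fin d × Fin d) → ℂ :=
  ((1 : Matrix (Fin d) (Fin d) ℂ) ⊗ₖ V) *ᵥ psiPlus d

lemma yVec_norm_le (d : ℕ) (hd : 1 ≤ d) {V : Matrix (Fin d) (Fin d) ℂ}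
    (hV : V ∈ Matrix.unitaryGroup (Fin d) ℂ) (p : Fin d × Fin d) :
    ‖yVec d V p‖ ≤ 1 := by
  have h : yVec d V p = V p.2 p.1 * ((Real.sqrt d)⁻¹ : ℝ) := by
    simp [yVec, Matrix.mulVec, dotProduct, psiPlus, Matrix.one_apply,
      Fintype.sum_prod_type, ite_mul, mul_ite]
  rw [h, norm_mul]
  have h1 : ‖V p.2 p.1‖ ≤ 1 := entry_norm_bound_of_unitary hV _ _
  have h2 : ‖(((Real.sqrt d)⁻¹ : ℝ) : ℂ)‖ ≤ 1 := by
    rw [Complex.norm_real]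
    have : (1 : ℝ) ≤ Real.sqrt d := by
      rw [show (1:ℝ) = Real.sqrt 1 by simp]
      exact Real.sqrt_le_sqrt (by exact_mod_cast hd)
    rw [Real.norm_eq_abs, _root_.abs_of_nonneg (by positivity)]
    exact inv_le_one_of_one_le₀ this
  calc ‖V p.2 p.1‖ * ‖(((Real.sqrt d)⁻¹ : ℝ) : ℂ)‖ ≤ 1 * 1 := by
        exact mul_le_mul h1 h2 (norm_nonneg _) zero_le_one
    _ = 1 := by ring

/-- Rewrite the fef term as a quadratic form in `yVec`. -/
lemma fef_term_eq (d : ℕ) (ρ : Matrix (Fin d × Fin d) (Fin d × Fin d) ℂ)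
    (V : Matrix (Fin d) (Fin d) ℂ) :
    star (psiPlus d) ⬝ᵥ
      ((((1 : Matrix (Fin d) (Fin d) ℂ) ⊗ₖ V)ᴴ * ρ *
        ((1 : Matrix (Fin d) (Fin d) ℂ) ⊗ₖ V)) *ᵥ psiPlus d)
    = star (yVec d V) ⬝ᵥ (ρ *ᵥ yVec d V) := by
  set A := (1 : Matrix (Fin d) (Fin d) ℂ) ⊗ₖ V
  rw [← Matrix.mulVec_mulVec, ← Matrix.mulVec_mulVec, Matrix.dotProduct_mulVec,
    ← Matrix.star_mulVec]
  rfl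

lemma quad_bound {n : Type*} [Fintype n] (M : Matrix n n ℂ) (y : n → ℂ)
    (hy : ∀ i, ‖y i‖ ≤ 1) :
    (star y ⬝ᵥ (M *ᵥ y)).re ≤ ∑ i, ∑ j, ‖M i j‖ := by
  refine le_trans (Complex.re_le_norm _) ?_
  show ‖star y ⬝ᵥ (M *ᵥ y)‖ ≤ _
  unfold dotProduct Matrix.mulVec
  refine le_trans (norm_sum_le _ _) (Finset.sum_le_sum fun i _ => ?_)
  rw [norm_mul]
  have hsi : ‖star y i‖ ≤ 1 := by simpa using hy i
  refine le_trans (mul_le_mul hsi le_rfl (norm_nonneg _) zero_le_one) ?_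
  rw [one_mul]
  unfold dotProduct
  refine le_trans (norm_sum_le _ _) (Finset.sum_le_sum fun j _ => ?_)
  rw [norm_mul]
  calc ‖M i j‖ * ‖y j‖ ≤ ‖M i j‖ * 1 :=
        mul_le_mul_of_nonneg_left (hy j) (norm_nonneg _)
    _ = ‖M i j‖ := mul_one _

lemma fef_bddAbove (d : ℕ) (hd : 1 ≤ d) (ρ : Matrix (Fin d × Fin d) (Fin d × Fin d) ℂ) :
    BddAbove (Set.range fun V : Matrix.unitaryGroup (Fin d) ℂ =>
      (star (psiPlus d) ⬝ᵥ
        ((((1 : Matrix (Fin d) (Fin d) ℂ) ⊗ₖ (V : Matrix (Fin d) (Fin d) ℂ))ᴴ * ρ *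
          ((1 : Matrix (Fin d) (Fin d) ℂ) ⊗ₖ (V : Matrix (Fin d) (Fin d) ℂ))) *ᵥ psiPlus d)).re) := by
  refine ⟨∑ i, ∑ j, ‖ρ i j‖, ?_⟩
  rintro x ⟨V, rfl⟩
  dsimp only
  rw [fef_term_eq]
  exact quad_bound ρ _ (yVec_norm_le d hd V.2)

/-- The set `𝔄𝔉_d` is convex: a convex combination of two density matrices with
absolute fully entangled fraction again has absolute fully entangled fraction. -/
theorem absFEF_convex (d : ℕ) (hd : 2 ≤ d)
    (ρ₁ ρ₂ : Matrix (Fin d × Fin d) (Fin d × Fin d) ℂ)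
    (hρ₁ : IsDensityMatrix ρ₁) (hρ₂ : IsDensityMatrix ρ₂)
    (h₁ : AbsFEF d ρ₁) (h₂ : AbsFEF d ρ₂)
    (t : ℝ) (ht0 : 0 ≤ t) (ht1 : t ≤ 1) :
    AbsFEF d ((t : ℂ) • ρ₁ + ((1 - t : ℝ) : ℂ) • ρ₂) := by
  have hd1 : 1 ≤ d := le_trans (by norm_num) hd
  intro U hU
  have hcombo : U * ((t : ℂ) • ρ₁ + ((1 - t : ℝ) : ℂ) • ρ₂) * Uᴴ
      = (t : ℂ) • (U * ρ₁ * Uᴴ) + ((1 - t : ℝ) : ℂ) • (U * ρ₂ * Uᴴ) := by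
    simp [Matrix.mul_add, Matrix.add_mul, Matrix.mul_smul, Matrix.smul_mul]
  rw [hcombo, fef]
  refine ciSup_le fun V => ?_
  rw [fef_term_eq]
  set y := yVec d (V : Matrix (Fin d) (Fin d) ℂ) with hy
  have hlin : (star y ⬝ᵥ (((t : ℂ) • (U * ρ₁ * Uᴴ) + ((1 - t : ℝ) : ℂ) • (U * ρ₂ * Uᴴ)) *ᵥ y)).re
      = t * (star y ⬝ᵥ ((U * ρ₁ * Uᴴ) *ᵥ y)).re
        + (1 - t) * (star y ⬝ᵥ ((U * ρ₂ * Uᴴ) *ᵥ y)).re := by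
    simp [Matrix.add_mulVec, Matrix.smul_mulVec, dotProduct_add,
      dotProduct_smul, smul_eq_mul, Complex.add_re, Complex.mul_re]
  rw [hlin]
  have hb1 : (star y ⬝ᵥ ((U * ρ₁ * Uᴴ) *ᵥ y)).re ≤ 1 / d := by
    rw [hy, ← fef_term_eq]
    refine le_trans (le_ciSup (fef_bddAbove d hd1 (U * ρ₁ * Uᴴ)) V) (h₁ U hU)
  have hb2 : (star y ⬝ᵥ ((U * ρ₂ * Uᴴ) *ᵥ y)).re ≤ 1 / d := by
    rw [hy, ← fef_term_eq]
    refine le_trans (le_ciSup (fef_bddAbove d hd1 (U * ρ₂ * Uᴴ)) V) (h₂ U hU)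
  have ht1' : 0 ≤ 1 - t := by linarith
  nlinarith [mul_le_mul_of_nonneg_left hb1 ht0, mul_le_mul_of_nonneg_left hb2 ht1']
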